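/- Let L be a Lie algebra containing two linearly independent elements a and b with [a,b] = kb for some nonzero scalar k. Set r = a⊗b − b⊗a and Δ_r(x) = x·r (adjoint diagonal action). Then (L, [·,·], Δ_r) is a triangular coboundary Lie bialgebra; in particular c(r) = 0 and Δ_r satisfies the co-Jacobi identity and strong anti-commutativity. -/

import Mathlib

open TensorProduct

/-- The cyclic permutation `ξ : L⊗L⊗L → L⊗L⊗L`, `x₁⊗x₂⊗x₃ ↦ x₂⊗x₃⊗x₁`. -/
noncomputable def cyclicPerm (F L : Type*) [Field F] [AddCommGroup L] [Module F L] :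
    L ⊗[F] (L ⊗[F] L) →ₗ[F] L ⊗[F] (L ⊗[F] L) :=
  (TensorProduct.assoc F L L L).toLinearMap ∘ₗ
    (TensorProduct.comm F L (L ⊗[F] L)).toLinearMap

/-- The coboundary map `Δ_r : L → L ⊗ L`, `x ↦ x · r`. -/
noncomputable def coboundaryDelta (F : Type*) {L : Type*} [Field F]
    [LieRing L] [LieAlgebra F L] (r : L ⊗[F] L) : L →ₗ[F] L ⊗[F] L :=
  (LieModule.toEnd F L (L ⊗[F] L)).flip r

/-- `c(r) = [r¹²,r¹³] + [r¹²,r²³] + [r¹³,r²³]` for `r = Σᵢ pᵢ ⊗ qᵢ`. -/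
noncomputable def cYB {F L : Type*} [Field F] [LieRing L] [LieAlgebra F L]
    {ι : Type*} [Fintype ι] (p q : ι → L) : L ⊗[F] (L ⊗[F] L) :=
  ∑ i, ∑ j, (⁅p i, p j⁆ ⊗ₜ[F] (q i ⊗ₜ[F] q j)
    + p i ⊗ₜ[F] (⁅q i, p j⁆ ⊗ₜ[F] q j)
    + p i ⊗ₜ[F] (p j ⊗ₜ[F] ⁅q i, q j⁆))

lemma coboundaryDelta_eq_lie {F L : Type*} [Field F] [LieRing L] [LieAlgebra F L]
    (r : L ⊗[F] L) (x : L) : coboundaryDelta F r x = ⁅x, r⁆ := rfl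

lemma cyclicPerm_tmul {F L : Type*} [Field F] [AddCommGroup L] [Module F L]
    (x y z : L) : cyclicPerm F L (x ⊗ₜ[F] (y ⊗ₜ[F] z)) = y ⊗ₜ[F] (z ⊗ₜ[F] x) := rfl

/-- If `a, b ∈ L` are linearly independent with `[a,b] = k b`, `k ≠ 0`,
and `r = a⊗b - b⊗a`, then `Δ_r` makes `L` a triangular coboundary Lie bialgebra:
`c(r) = 0`, strong anti-commutativity, co-Jacobi identity, and compatibility hold. -/
theorem witt_bialg_stmt4 {F L : Type*} [Field F] [CharZero F]
    [LieRing L] [LieAlgebra F L] (a b : L) (k : F) (hk : k ≠ 0)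
    (hab : LinearIndependent F ![a, b]) (hbr : ⁅a, b⁆ = k • b)
    (r : L ⊗[F] L) (hr : r = a ⊗ₜ[F] b - b ⊗ₜ[F] a) :
    cYB (F := F) ![a, -b] ![b, a] = 0 ∧
    (∀ x : L, coboundaryDelta F r x ∈ LinearMap.range
      (LinearMap.id - (TensorProduct.comm F L L).toLinearMap)) ∧
    (∀ x : L,
      ((LinearMap.id : L ⊗[F] (L ⊗[F] L) →ₗ[F] L ⊗[F] (L ⊗[F] L)) + cyclicPerm F L
        + cyclicPerm F L ∘ₗ cyclicPerm F L)
        (LinearMap.lTensor L (coboundaryDelta F r) (coboundaryDelta F r x)) = 0) ∧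
    (∀ x y : L, coboundaryDelta F r ⁅x, y⁆
      = ⁅x, coboundaryDelta F r y⁆ - ⁅y, coboundaryDelta F r x⁆) := by
  subst hr
  have hba : ⁅b, a⁆ = -(k • b) := by rw [← lie_skew, hbr]
  have key : ∀ x : L, coboundaryDelta F (a ⊗ₜ[F] b - b ⊗ₜ[F] a) x
      = ⁅x, a⁆ ⊗ₜ[F] b + a ⊗ₜ[F] ⁅x, b⁆ - (⁅x, b⁆ ⊗ₜ[F] a + b ⊗ₜ[F] ⁅x, a⁆) := by
    intro x
    rw [coboundaryDelta_eq_lie, lie_sub, TensorProduct.LieModule.lie_tmul_right,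
      TensorProduct.LieModule.lie_tmul_right]
  refine ⟨?_, ?_, ?_, ?_⟩
  · simp only [cYB, Fin.sum_univ_two, Matrix.cons_val_zero, Matrix.cons_val_one, Matrix.head_cons,
      lie_self, lie_neg, neg_lie, hbr, hba, neg_neg, zero_tmul, tmul_zero, neg_zero,
      tmul_neg, neg_tmul, tmul_smul, ← smul_tmul']
    module
  · intro x
    refine ⟨⁅x, a⁆ ⊗ₜ[F] b + a ⊗ₜ[F] ⁅x, b⁆, ?_⟩
    simp only [LinearMap.sub_apply, LinearMap.id_apply, LinearEquiv.coe_coe, map_add,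
      comm_tmul, key x]
    abel
  · intro x
    have hda : coboundaryDelta F (a ⊗ₜ[F] b - b ⊗ₜ[F] a) a
        = k • (a ⊗ₜ[F] b) - k • (b ⊗ₜ[F] a) := by
      rw [key a]; simp [hbr, lie_self, tmul_smul, ← smul_tmul']
    have hdb : coboundaryDelta F (a ⊗ₜ[F] b - b ⊗ₜ[F] a) b = 0 := by
      rw [key b]
      simp only [hba, lie_self, tmul_zero, zero_tmul, neg_tmul, tmul_neg, tmul_smul,
        ← smul_tmul']
      abel
    have hjac : ⁅⁅x, a⁆, b⁆ = ⁅⁅x, b⁆, a⁆ + k • ⁅x, b⁆ := by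
      rw [lie_lie, hbr, lie_smul, ← lie_skew a ⁅x, b⁆]; abel
    rw [key x]
    simp only [map_add, map_sub, map_zero, LinearMap.lTensor_tmul, hda, hdb, key ⁅x, a⁆,
      key ⁅x, b⁆, tmul_zero, tmul_sub, tmul_add, tmul_smul, map_smul, LinearMap.add_apply,
      LinearMap.id_apply, LinearMap.comp_apply, cyclicPerm_tmul, hjac, add_tmul, tmul_smul,
      ← smul_tmul']
    module
  · intro x y
    simp only [coboundaryDelta_eq_lie]
    exact lie_lie x y _
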